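/- arXiv:1604.00362 — 2 statements merged into one kernel-verified Lean document; each statement's English description precedes it below -/
import Mathlib

section
/- For every natural number p, the conjugate Féjer kernel K̃_p(ω) = ∑_{j=0}^p 2∑_{k=0}^j sin(2πkω) is non-negative whenever ω ∈ [m, m + 1/2] for some integer m. -/
open Real Finset

private lemma innerB (t : ℝ) (n : ℕ) :
    4 * Real.sin (t/2)^2 * ∑ k ∈ Finset.range (n+1), Real.sin (k*t)
      = Real.sin t + Real.sin (n*t) - Real.sin ((n+1)*t) := by
  have hc : Real.cos t = 1 - 2 * Real.sin (t/2)^2 := by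
    have h1 : Real.cos (2*(t/2)) = 2 * Real.cos (t/2)^2 - 1 := Real.cos_two_mul (t/2)
    have h2 := Real.sin_sq_add_cos_sq (t/2)
    rw [show 2*(t/2) = t by ring] at h1
    linarith
  induction n with
  | zero => simp
  | succ n ih =>
    rw [Finset.sum_range_succ, mul_add, ih]
    push_cast
    have e1 : Real.sin (((n:ℝ)+1+1)*t) = Real.sin (((n:ℝ)+1)*t) * Real.cos t
        + Real.cos (((n:ℝ)+1)*t) * Real.sin t := by
      rw [show ((n:ℝ)+1+1)*t = ((n:ℝ)+1)*t + t by ring, Real.sin_add]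
    have e2 : Real.sin ((n:ℝ)*t) = Real.sin (((n:ℝ)+1)*t) * Real.cos t
        - Real.cos (((n:ℝ)+1)*t) * Real.sin t := by
      rw [show (n:ℝ)*t = ((n:ℝ)+1)*t - t by ring, Real.sin_sub]
    rw [hc] at e1 e2
    linarith [e1, e2]

private lemma lemA (t : ℝ) (n : ℕ) :
    2 * Real.sin (t/2)^2 * ∑ j ∈ Finset.range (n+1),
        (2 * ∑ k ∈ Finset.range (j+1), Real.sin (k*t))
      = (n+1) * Real.sin t - Real.sin ((n+1)*t) := by
  induction n with
  | zero => simp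
  | succ n ih =>
    rw [Finset.sum_range_succ, mul_add, ih]
    have hB := innerB t (n+1)
    push_cast at *
    nlinarith [hB]

private lemma lemC (t : ℝ) (ht : t ∈ Set.Icc 0 π) (n : ℕ) :
    |Real.sin (n*t)| ≤ n * Real.sin t := by
  have hs : 0 ≤ Real.sin t := Real.sin_nonneg_of_mem_Icc ht
  induction n with
  | zero => simp
  | succ n ih =>
    have e : Real.sin ((n+1:ℕ)*t) = Real.sin ((n:ℕ)*t) * Real.cos t
        + Real.cos ((n:ℕ)*t) * Real.sin t := by
      push_cast
      rw [show ((n:ℝ)+1)*t = (n:ℝ)*t + t by ring, Real.sin_add]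
    have b1 : |Real.sin ((n:ℕ)*t) * Real.cos t| ≤ |Real.sin ((n:ℕ)*t)| := by
      rw [abs_mul]
      exact mul_le_of_le_one_right (abs_nonneg _) (Real.abs_cos_le_one t)
    have b2 : |Real.cos ((n:ℕ)*t) * Real.sin t| ≤ Real.sin t := by
      rw [abs_mul, abs_of_nonneg hs]
      exact mul_le_of_le_one_left hs (Real.abs_cos_le_one _)
    calc |Real.sin ((n+1:ℕ)*t)|
        ≤ |Real.sin ((n:ℕ)*t) * Real.cos t| + |Real.cos ((n:ℕ)*t) * Real.sin t| := by
          rw [e]; exact abs_add_le _ _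
      _ ≤ |Real.sin ((n:ℕ)*t)| + Real.sin t := add_le_add b1 b2
      _ ≤ (n:ℝ) * Real.sin t + Real.sin t := by gcongr
      _ = ((n+1:ℕ):ℝ) * Real.sin t := by push_cast; ring

theorem conj_fejer_kernel_nonneg (p : ℕ) (ω : ℝ) (m : ℤ)
    (hω : ω ∈ Set.Icc (m : ℝ) (m + 1 / 2)) :
    0 ≤ ∑ j ∈ Finset.range (p + 1),
        (2 * ∑ k ∈ Finset.range (j + 1), Real.sin (2 * π * k * ω)) := by
  obtain ⟨h1, h2⟩ := hω
  set x : ℝ := ω - m with hxdef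
  set t : ℝ := 2 * π * x with htdef
  have hπ := Real.pi_pos
  have hx0 : 0 ≤ x := by simp [hxdef]; linarith
  have hx1 : x ≤ 1/2 := by simp [hxdef]; linarith
  have ht : t ∈ Set.Icc 0 π := by
    constructor
    · positivity
    · rw [htdef]; nlinarith
  have hsin : ∀ k : ℕ, Real.sin (2 * π * k * ω) = Real.sin (k * t) := by
    intro k
    have := Real.sin_add_int_mul_two_pi ((k:ℝ) * t) ((k:ℤ) * m)
    rw [← this]
    congr 1
    rw [htdef, hxdef]
    push_cast
    ring
  have hrw : ∑ j ∈ Finset.range (p + 1),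
        (2 * ∑ k ∈ Finset.range (j + 1), Real.sin (2 * π * k * ω))
      = ∑ j ∈ Finset.range (p + 1),
        (2 * ∑ k ∈ Finset.range (j + 1), Real.sin (k * t)) := by
    refine Finset.sum_congr rfl fun j _ => ?_
    refine congrArg (2 * ·) (Finset.sum_congr rfl fun k _ => hsin k)
  rw [hrw]
  by_cases hz : Real.sin (t/2) = 0
  · -- then t = 0
    have ht2 : t/2 = 0 := by
      have hb : |t/2| < π := by
        rw [abs_of_nonneg (by linarith [ht.1])]
        linarith [ht.2, hπ]
      exact (Real.sin_eq_zero_iff_of_lt_of_lt (by linarith [abs_lt.mp hb]) (abs_lt.mp hb).2).mp hz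
    have ht0 : t = 0 := by linarith
    simp [ht0]
  · have hkey := lemA t p
    have hnum : 0 ≤ ((p:ℝ)+1) * Real.sin t - Real.sin (((p:ℕ)+1)*t) := by
      have hC := lemC t ht (p+1)
      push_cast at hC ⊢
      have := abs_le.mp hC
      linarith [this.2]
    have hden : 0 < 2 * Real.sin (t/2)^2 := by
      have : Real.sin (t/2) ≠ 0 := hz
      positivity
    push_cast at hkey hnum
    nlinarith [hkey, hnum, hden]
end

section
/- Let a: ℤ → ℝ and b: ℤ → ℝ with a(j) ≤ 0 for all j ≠ 0, a(−j) = a(j), b(−j) = −b(j), sign(j·b(j)) constant equal to s ∈ {−1,1} for j ≠ 0, and suppose A := ∑_{j∈ℤ} (a(j) − s·sign(j)·b(j)) converges and A ≥ 0. Then for m̃ = 2m+1 and every k ∈ {0,…,m̃−1}, a(0) + 2∑_{j=1}^{m} [a(j)cos(2πjk/m̃) − b(j)sin(2πjk/m̃)] ≥ A ≥ 0. -/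
open Real Finset

theorem craigmile_complex_bound (a b : ℤ → ℝ)
    (ha_neg : ∀ j : ℤ, j ≠ 0 → a j ≤ 0)
    (ha_even : ∀ j : ℤ, a (-j) = a j)
    (hb_odd : ∀ j : ℤ, b (-j) = -b j)
    (s : ℝ) (hs : s = 1 ∨ s = -1)
    (hsign : ∀ j : ℤ, j ≠ 0 → Real.sign ((j : ℝ) * b j) = s)
    (A : ℝ)
    (hA : HasSum (fun j : ℤ => a j - s * Real.sign (j : ℝ) * b j) A)
    (hA0 : 0 ≤ A)
    (m : ℕ) (hm : 0 < m) (k : ℕ) (hk : k < 2 * m + 1) :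
    A ≤ a 0 + 2 * ∑ j ∈ Finset.Icc 1 m,
        (a j * Real.cos (2 * π * j * k / (2 * m + 1)) -
          b j * Real.sin (2 * π * j * k / (2 * m + 1))) := by
  set f : ℤ → ℝ := fun j => a j - s * Real.sign (j : ℝ) * b j with hf
  have hs0 : s ≠ 0 := by rcases hs with h | h <;> simp [h]
  -- For j > 0, s * b j = |b j|
  have habs : ∀ j : ℤ, 0 < j → s * b j = |b j| := by
    intro j hj
    have h := hsign j (by omega)
    have hjpos : (0 : ℝ) < (j : ℝ) := by exact_mod_cast hj
    rcases lt_trichotomy (b j) 0 with hb | hb | hb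
    · have hsg : Real.sign ((j : ℝ) * b j) = -1 :=
        Real.sign_of_neg (by nlinarith)
      rw [hsg] at h
      rw [← h, abs_of_neg hb]; ring
    · exfalso; apply hs0; rw [← h, hb, mul_zero, Real.sign_zero]
    · have hsg : Real.sign ((j : ℝ) * b j) = 1 :=
        Real.sign_of_pos (by nlinarith)
      rw [hsg] at h
      rw [← h, abs_of_pos hb]; ring
  -- f is even
  have hfeven : ∀ j : ℤ, f (-j) = f j := by
    intro j
    simp only [hf]
    rw [ha_even, hb_odd]
    push_cast
    rw [Real.sign_neg]
    ring
  -- f j for positive j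
  have hfpos : ∀ j : ℤ, 0 < j → f j = a j - |b j| := by
    intro j hj
    have hjpos : (0 : ℝ) < (j : ℝ) := by exact_mod_cast hj
    simp only [hf]
    rw [Real.sign_of_pos hjpos, ← habs j hj]
    ring
  -- f j ≤ 0 for j ≠ 0
  have hfle : ∀ j : ℤ, j ≠ 0 → f j ≤ 0 := by
    intro j hj
    rcases lt_or_gt_of_ne hj with h | h
    · rw [← hfeven j] at *
      rw [hfpos (-j) (by omega)]
      have := ha_neg (-j) (by omega)
      have := abs_nonneg (b (-j))
      linarith
    · rw [hfpos j h]
      have := ha_neg j hj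
      have := abs_nonneg (b j)
      linarith
  -- A ≤ partial sum over Icc (-m) m
  have key : A ≤ ∑ j ∈ Finset.Icc (-(m : ℤ)) m, f j := by
    have h1 : ∑ j ∈ Finset.Icc (-(m : ℤ)) m, (fun j => -(f j)) j ≤ -A := by
      apply sum_le_hasSum _ _ hA.neg
      intro i hi
      simp only [Finset.mem_Icc, not_and_or, not_le] at hi
      have hi0 : i ≠ 0 := by omega
      simp [neg_nonneg, hfle i hi0]
    simp only [Finset.sum_neg_distrib] at h1
    linarith
  -- split the symmetric sum
  have hsplit : ∑ j ∈ Finset.Icc (-(m : ℤ)) m, f j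
      = f 0 + 2 * ∑ j ∈ Finset.Icc (1 : ℤ) m, f j := by
    have hunion : Finset.Icc (-(m : ℤ)) m
        = Finset.Icc (-(m : ℤ)) (-1) ∪ Finset.Icc (0 : ℤ) m := by
      ext x; simp only [Finset.mem_Icc, Finset.mem_union]; omega
    have hdisj : Disjoint (Finset.Icc (-(m : ℤ)) (-1)) (Finset.Icc (0 : ℤ) m) := by
      rw [Finset.disjoint_left]
      intro x hx hx'
      simp only [Finset.mem_Icc] at hx hx'
      omega
    rw [hunion, Finset.sum_union hdisj]
    have hneg : Finset.Icc (-(m : ℤ)) (-1) = (Finset.Icc (1 : ℤ) m).image (fun x => -x) := by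
      ext x
      simp only [Finset.mem_image, Finset.mem_Icc]
      constructor
      · intro hx; exact ⟨-x, ⟨by omega, by omega⟩, by omega⟩
      · rintro ⟨y, hy, rfl⟩; omega
    rw [hneg, Finset.sum_image (by intro x _ y _ h; simp only at h; omega)]
    have h0 : ∑ j ∈ Finset.Icc (0 : ℤ) m, f j
        = f 0 + ∑ j ∈ Finset.Icc (1 : ℤ) m, f j := by
      rw [show Finset.Icc (0 : ℤ) m = insert 0 (Finset.Icc (1 : ℤ) m) by
        ext x; simp only [Finset.mem_insert, Finset.mem_Icc]; omega]
      rw [Finset.sum_insert (by simp)]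
    rw [h0]
    simp only [hfeven]
    ring
  -- reindex ℤ-sum to ℕ-sum
  have hreindex : ∑ j ∈ Finset.Icc (1 : ℤ) m, f j = ∑ j ∈ Finset.Icc 1 m, f (j : ℤ) := by
    have himg : (Finset.Icc 1 m).image (fun n : ℕ => (n : ℤ)) = Finset.Icc (1 : ℤ) m := by
      ext x
      simp only [Finset.mem_image, Finset.mem_Icc]
      constructor
      · rintro ⟨y, hy, rfl⟩; omega
      · intro hx; exact ⟨x.toNat, ⟨by omega, by omega⟩, by omega⟩
    rw [← himg, Finset.sum_image (by intro x _ y _ h; simp only at h; exact_mod_cast h)]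
  -- termwise comparison
  have hterm : ∀ j ∈ Finset.Icc 1 m, f (j : ℤ) ≤
      a j * Real.cos (2 * π * j * k / (2 * m + 1)) -
        b j * Real.sin (2 * π * j * k / (2 * m + 1)) := by
    intro j hj
    simp only [Finset.mem_Icc] at hj
    have hjpos : (0 : ℤ) < (j : ℤ) := by exact_mod_cast hj.1
    rw [hfpos _ hjpos]
    set θ := 2 * π * (j : ℝ) * k / (2 * m + 1)
    have hcos : Real.cos θ ≤ 1 := Real.cos_le_one θ
    have haj : a j ≤ 0 := ha_neg _ (by omega)
    have h1 : a j ≤ a j * Real.cos θ := by nlinarith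
    have h2 : b j * Real.sin θ ≤ |b j| := by
      calc b j * Real.sin θ ≤ |b j * Real.sin θ| := le_abs_self _
        _ = |b j| * |Real.sin θ| := abs_mul _ _
        _ ≤ |b j| * 1 := by
            apply mul_le_mul_of_nonneg_left (Real.abs_sin_le_one θ) (abs_nonneg _)
        _ = |b j| := mul_one _
    linarith
  have hsum : ∑ j ∈ Finset.Icc 1 m, f (j : ℤ) ≤
      ∑ j ∈ Finset.Icc 1 m,
        (a j * Real.cos (2 * π * j * k / (2 * m + 1)) -
          b j * Real.sin (2 * π * j * k / (2 * m + 1))) :=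
    Finset.sum_le_sum hterm
  have hf0 : f 0 = a 0 := by simp [hf]
  calc A ≤ ∑ j ∈ Finset.Icc (-(m : ℤ)) m, f j := key
    _ = f 0 + 2 * ∑ j ∈ Finset.Icc (1 : ℤ) m, f j := hsplit
    _ = a 0 + 2 * ∑ j ∈ Finset.Icc 1 m, f (j : ℤ) := by rw [hf0, hreindex]
    _ ≤ _ := by linarith
end
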